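/- Assume r* = s* (e.g. one of the equivalence conditions holds), and assume q(x) > 0 near every minimizer. Then r* = inf_{x∈S} p(x)/q(x) is attained at some point of S if and only if s* is attained at a minimizer (x₀*, x*) of the homogenized problem with x₀* ≠ 0; moreover in that case x*/x₀* is a minimizer of the original problem. -/

import Mathlib

open MvPolynomial

lemma eval_smul_of_isHomogeneous {σ : Type*} {P : MvPolynomial σ ℝ} {d : ℕ}
    (hP : P.IsHomogeneous d) (c : ℝ) (x : σ → ℝ) :
    eval (c • x) P = c ^ d * eval x P := by
  rw [eval_eq, eval_eq, Finset.mul_sum]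
  refine Finset.sum_congr rfl fun m hm => ?_
  have hw : Finsupp.degree m = d := by
    rw [Finsupp.degree_eq_weight_one]
    exact hP (mem_support_iff.mp hm)
  have hsum : ∑ i ∈ m.support, m i = d := by
    exact hw
  have : ∏ i ∈ m.support, (c • x) i ^ m i = c ^ d * ∏ i ∈ m.support, x i ^ m i := by
    rw [← hsum, ← Finset.prod_pow_eq_pow_sum, ← Finset.prod_mul_distrib]
    refine Finset.prod_congr rfl fun i _ => ?_
    simp [mul_pow]
  rw [this]; ring

/-- assuming `r* = s* = ρ` (both greatest lower bounds) and `q > 0`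
at the relevant points, `r*` is attained iff `s*` is attained at a minimizer
`(x₀*, x*)` with `x₀* ≠ 0`; moreover in that case `x*/x₀*` is a minimizer of the
original problem. -/
theorem attained_iff_homogenized_attained_off_hyperplane
    (n m₁ m₂ : ℕ)
    (p q : MvPolynomial (Fin n) ℝ)
    (h : Fin m₁ → MvPolynomial (Fin n) ℝ) (g : Fin m₂ → MvPolynomial (Fin n) ℝ)
    (d : ℕ) (hd : d = max p.totalDegree q.totalDegree)
    (P Q : MvPolynomial (Fin (n + 1)) ℝ)
    (hP : P.IsHomogeneous d)
    (hP1 : ∀ x : Fin n → ℝ, eval (Fin.cons 1 x) P = eval x p)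
    (hQ : Q.IsHomogeneous d)
    (hQ1 : ∀ x : Fin n → ℝ, eval (Fin.cons 1 x) Q = eval x q)
    (Hh : Fin m₁ → MvPolynomial (Fin (n + 1)) ℝ)
    (Hg : Fin m₂ → MvPolynomial (Fin (n + 1)) ℝ)
    (hHh : ∀ i, (Hh i).IsHomogeneous (h i).totalDegree)
    (hHh1 : ∀ i, ∀ x : Fin n → ℝ, eval (Fin.cons 1 x) (Hh i) = eval x (h i))
    (hHg : ∀ j, (Hg j).IsHomogeneous (g j).totalDegree)
    (hHg1 : ∀ j, ∀ x : Fin n → ℝ, eval (Fin.cons 1 x) (Hg j) = eval x (g j))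
    (rfeas : (Fin n → ℝ) → Prop)
    (hrfeas : ∀ x, rfeas x ↔
      (∀ i, eval x (h i) = 0) ∧ (∀ j, 0 ≤ eval x (g j)) ∧ 0 < eval x q)
    (sfeas : (Fin (n + 1) → ℝ) → Prop)
    (hsfeas : ∀ xt, sfeas xt ↔
      (∀ i, eval xt (Hh i) = 0) ∧ eval xt Q = 1 ∧
        (∀ j, 0 ≤ eval xt (Hg j)) ∧ 0 ≤ xt 0)
    (ρ : ℝ)
    (hr : IsGLB {v : ℝ | ∃ x, rfeas x ∧ v = eval x p / eval x q} ρ)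
    (hs : IsGLB {v : ℝ | ∃ xt, sfeas xt ∧ v = eval xt P} ρ) :
    ((∃ x, rfeas x ∧ eval x p / eval x q = ρ) ↔
      (∃ xt, sfeas xt ∧ xt 0 ≠ 0 ∧ eval xt P = ρ)) ∧
    (∀ xt, sfeas xt → xt 0 ≠ 0 → eval xt P = ρ →
      rfeas (fun i : Fin n => xt i.succ / xt 0) ∧
        eval (fun i : Fin n => xt i.succ / xt 0) p /
          eval (fun i : Fin n => xt i.succ / xt 0) q = ρ) := by
  -- The second conjunct: "pull back" a homogenized minimizer.
  have key2 : ∀ xt, sfeas xt → xt 0 ≠ 0 → eval xt P = ρ →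
      rfeas (fun i : Fin n => xt i.succ / xt 0) ∧
        eval (fun i : Fin n => xt i.succ / xt 0) p /
          eval (fun i : Fin n => xt i.succ / xt 0) q = ρ := by
    intro xt hfeas hne hval
    obtain ⟨hh0, hq1, hg0, h00⟩ := (hsfeas xt).mp hfeas
    have hpos : 0 < xt 0 := lt_of_le_of_ne h00 (Ne.symm hne)
    set x : Fin n → ℝ := fun i : Fin n => xt i.succ / xt 0 with hx
    have hcons : Fin.cons 1 x = (xt 0)⁻¹ • xt := by
      funext j
      refine Fin.cases ?_ (fun i => ?_) j
      · simp [inv_mul_cancel₀ hne]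
      · simp [hx, div_eq_inv_mul]
    have cpos : (0:ℝ) < (xt 0)⁻¹ := inv_pos.mpr hpos
    have hqx : eval x q = ((xt 0)⁻¹) ^ d := by
      rw [← hQ1 x, hcons, eval_smul_of_isHomogeneous hQ, hq1, mul_one]
    have hqpos : 0 < eval x q := by rw [hqx]; positivity
    have hfx : rfeas x := by
      rw [hrfeas]
      refine ⟨fun i => ?_, fun j => ?_, hqpos⟩
      · rw [← hHh1 i x, hcons, eval_smul_of_isHomogeneous (hHh i), hh0 i, mul_zero]
      · rw [← hHg1 j x, hcons, eval_smul_of_isHomogeneous (hHg j)]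
        exact mul_nonneg (by positivity) (hg0 j)
    have hpx : eval x p = ((xt 0)⁻¹) ^ d * ρ := by
      rw [← hP1 x, hcons, eval_smul_of_isHomogeneous hP, hval]
    refine ⟨hfx, ?_⟩
    rw [hpx, hqx]
    exact mul_div_cancel_left₀ ρ (by positivity)
  refine ⟨⟨?_, ?_⟩, key2⟩
  · -- forward: from a minimizer of the original problem build one of the homogenized one
    rintro ⟨x, hfx, hval⟩
    obtain ⟨hh0, hg0, hqpos⟩ := (hrfeas x).mp hfx
    set a : ℝ := eval x q with ha
    -- choose c > 0 with c ^ d * a = 1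
    obtain ⟨c, hcpos, hc⟩ : ∃ c : ℝ, 0 < c ∧ c ^ d * a = 1 := by
      rcases Nat.eq_zero_or_pos d with hd0 | hdpos
      · -- degree 0: Q is constant, and feasibility of the homogenized problem forces a = 1
        have hne : {v : ℝ | ∃ xt, sfeas xt ∧ v = eval xt P}.Nonempty := by
          by_contra hemp
          rw [Set.not_nonempty_iff_eq_empty] at hemp
          have h1 : ρ + 1 ∈ lowerBounds {v : ℝ | ∃ xt, sfeas xt ∧ v = eval xt P} := by
            rw [hemp]; intro v hv; exact absurd hv (Set.notMem_empty v)
          have := hs.2 h1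
          linarith
        obtain ⟨v, xt₁, hxt₁, _⟩ := hne
        have hQ1' := (hsfeas xt₁).mp hxt₁
        -- Q homogeneous of degree 0 is constant
        have hconst : ∀ y z : Fin (n+1) → ℝ, eval y Q = eval z Q := by
          intro y z
          have h1 : eval ((0:ℝ) • y) Q = (0:ℝ) ^ d * eval y Q :=
            eval_smul_of_isHomogeneous hQ 0 y
          have h2 : eval ((0:ℝ) • z) Q = (0:ℝ) ^ d * eval z Q :=
            eval_smul_of_isHomogeneous hQ 0 z
          simp only [zero_smul] at h1 h2
          rw [hd0] at h1 h2
          simp only [pow_zero, one_mul] at h1 h2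
          rw [← h1, ← h2]
        have : a = 1 := by
          rw [ha, ← hQ1 x, hconst (Fin.cons 1 x) xt₁, hQ1'.2.1]
        exact ⟨1, one_pos, by rw [hd0, pow_zero, one_mul, this]⟩
      · refine ⟨a ^ (-(1:ℝ)/d), Real.rpow_pos_of_pos hqpos _, ?_⟩
        rw [← Real.rpow_natCast (a ^ (-(1:ℝ)/d)) d, ← Real.rpow_mul hqpos.le]
        have : -(1:ℝ)/d * d = -1 := by
          field_simp
        rw [this, Real.rpow_neg_one]
        exact inv_mul_cancel₀ (ne_of_gt hqpos)
    refine ⟨c • (Fin.cons 1 x : Fin (n+1) → ℝ), ?_, ?_, ?_⟩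
    · rw [hsfeas]
      refine ⟨fun i => ?_, ?_, fun j => ?_, ?_⟩
      · rw [eval_smul_of_isHomogeneous (hHh i), hHh1 i, hh0 i, mul_zero]
      · rw [eval_smul_of_isHomogeneous hQ, hQ1]
        exact hc
      · rw [eval_smul_of_isHomogeneous (hHg j), hHg1 j]
        exact mul_nonneg (by positivity) (hg0 j)
      · simp [hcpos.le]
    · simp [ne_of_gt hcpos]
    · rw [eval_smul_of_isHomogeneous hP, hP1, ← hval]
      have h1 : c ^ d = a⁻¹ := by
        field_simp at hc ⊢
        linarith [hc]
      rw [h1]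
      exact (div_eq_inv_mul _ _).symm
  · rintro ⟨xt, hfeas, hne, hval⟩
    obtain ⟨h1, h2⟩ := key2 xt hfeas hne hval
    exact ⟨_, h1, h2⟩
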